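/- Fix an integer n ≥ 1, let ζ := exp(2πi/n) ∈ ℂ, and let q : ℤ/nℤ → ℂ[x,x⁻¹] be any family of Laurent polynomials. Let M be the associated circulant matrix, M_{g,h} := q_{g−h}, and for k ∈ ℤ/nℤ let p_k := Σ_{g∈ℤ/nℤ} ζ^{(k·g)}·q_g be the eigenvalue polynomials. Then for every column index h ∈ ℤ/nℤ: Σ_{g∈ℤ/nℤ} ‖(M·M)_{g,h} − n·(q_g · q_{−h})‖₁ ≤ Σ_{(k,l) ∈ (ℤ/nℤ)², k ≠ l} ‖p_k · p_l‖₁. -/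

import Mathlib

open Finsupp

/-- The coefficients of a complex Laurent polynomial. -/
def lcoeffC (p : AddMonoidAlgebra ℂ ℤ) : ℤ →₀ ℂ := p.coeff

/-- The `l¹` norm of a complex Laurent polynomial. -/
noncomputable def l1C (p : AddMonoidAlgebra ℂ ℤ) : ℝ := (lcoeffC p).sum fun _ c => ‖c‖

lemma l1C_eq_sum (p : AddMonoidAlgebra ℂ ℤ) (s : Finset ℤ) (hs : (lcoeffC p).support ⊆ s) :
    l1C p = ∑ a ∈ s, ‖lcoeffC p a‖ := by
  rw [l1C, Finsupp.sum]
  exact Finset.sum_subset hs (fun a _ ha => by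
    rw [Finsupp.notMem_support_iff.mp ha, norm_zero])

lemma lcoeffC_add (p r : AddMonoidAlgebra ℂ ℤ) : lcoeffC (p + r) = lcoeffC p + lcoeffC r := rfl
lemma lcoeffC_smul (c : ℂ) (p : AddMonoidAlgebra ℂ ℤ) : lcoeffC (c • p) = c • lcoeffC p := rfl
lemma lcoeffC_neg (p : AddMonoidAlgebra ℂ ℤ) : lcoeffC (-p) = -lcoeffC p := rfl

lemma l1C_zero : l1C 0 = 0 := by simp [l1C, lcoeffC]

lemma l1C_add_le (p r : AddMonoidAlgebra ℂ ℤ) : l1C (p + r) ≤ l1C p + l1C r := by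
  classical
  set s := (lcoeffC (p+r)).support ∪ (lcoeffC p).support ∪ (lcoeffC r).support with hs
  rw [l1C_eq_sum (p+r) s (fun a ha => Finset.mem_union_left _ (Finset.mem_union_left _ ha)),
      l1C_eq_sum p s (fun a ha => Finset.mem_union_left _ (Finset.mem_union_right _ ha)),
      l1C_eq_sum r s (fun a ha => Finset.mem_union_right _ ha), ← Finset.sum_add_distrib]
  refine Finset.sum_le_sum fun a _ => ?_
  rw [lcoeffC_add]
  exact norm_add_le _ _

lemma l1C_smul (c : ℂ) (p : AddMonoidAlgebra ℂ ℤ) : l1C (c • p) = ‖c‖ * l1C p := by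
  rw [l1C, l1C, lcoeffC_smul, Finsupp.sum_smul_index' (fun a => norm_zero), Finsupp.mul_sum]
  simp [norm_mul]

lemma l1C_neg (p : AddMonoidAlgebra ℂ ℤ) : l1C (-p) = l1C p := by
  have : (-p : AddMonoidAlgebra ℂ ℤ) = (-1 : ℂ) • p := by
    rw [neg_smul, one_smul]
  rw [this, l1C_smul]; simp

lemma l1C_sum_le {ι : Type*} (s : Finset ι) (f : ι → AddMonoidAlgebra ℂ ℤ) :
    l1C (∑ i ∈ s, f i) ≤ ∑ i ∈ s, l1C (f i) := by
  classical
  induction s using Finset.cons_induction with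
  | empty => simp [l1C_zero]
  | cons a s ha ih =>
      rw [Finset.sum_cons, Finset.sum_cons]
      exact le_trans (l1C_add_le _ _) (by linarith)

section Core
variable (n : ℕ) [NeZero n]

noncomputable def zC : ℂ := Complex.exp (2 * Real.pi * Complex.I / n)

lemma zC_pow_n : (zC n) ^ n = 1 := (Complex.isPrimitiveRoot_exp n (NeZero.ne n)).pow_eq_one

lemma zC_pow_mod (m : ℕ) : (zC n) ^ (m % n) = (zC n) ^ m := by
  conv_rhs => rw [← Nat.mod_add_div m n, pow_add, pow_mul, zC_pow_n, one_pow, mul_one]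

lemma zC_val_add (x y : ZMod n) :
    (zC n) ^ x.val * (zC n) ^ y.val = (zC n) ^ ((x + y).val) := by
  rw [← pow_add, ZMod.val_add, zC_pow_mod]

lemma zC_norm : ‖zC n‖ = 1 := by
  have : (2 * Real.pi * Complex.I / n) = ((2 * Real.pi / n : ℝ) : ℂ) * Complex.I := by
    push_cast; ring
  rw [zC, this, Complex.norm_exp_ofReal_mul_I]

lemma sum_zmod_pow_val (w : ℂ) :
    ∑ k : ZMod n, w ^ (k : ZMod n).val = ∑ i ∈ Finset.range n, w ^ i := by
  refine Finset.sum_nbij' (fun k => k.val) (fun i => (i : ZMod n)) ?_ ?_ ?_ ?_ ?_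
  · intro k _; exact Finset.mem_range.mpr (ZMod.val_lt k)
  · intro i _; exact Finset.mem_univ _
  · intro k _; exact ZMod.natCast_zmod_val k
  · intro i hi; exact ZMod.val_cast_of_lt (Finset.mem_range.mp hi)
  · intro k _; rfl

lemma zC_orth (a : ZMod n) :
    ∑ k : ZMod n, (zC n) ^ ((k * a).val) = if a = 0 then (n : ℂ) else 0 := by
  have key : ∀ k : ZMod n, (zC n) ^ ((k * a).val) = ((zC n) ^ a.val) ^ k.val := by
    intro k
    rw [ZMod.val_mul, zC_pow_mod, ← pow_mul, mul_comm a.val k.val, pow_mul]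
  simp only [key]
  rw [sum_zmod_pow_val]
  by_cases ha : a = 0
  · simp [ha, ZMod.val_zero, ha]
  · rw [if_neg ha]
    have hw : (zC n) ^ a.val ≠ 1 := by
      refine (Complex.isPrimitiveRoot_exp n (NeZero.ne n)).pow_ne_one_of_pos_of_lt ?_ (ZMod.val_lt a)
      exact (fun h => ha ((ZMod.val_eq_zero a).mp h))
    rw [geom_sum_eq hw]
    rw [← pow_mul, mul_comm a.val n, pow_mul, zC_pow_n, one_pow, sub_self, zero_div]

variable (q : ZMod n → AddMonoidAlgebra ℂ ℤ)

noncomputable def PC (k : ZMod n) : AddMonoidAlgebra ℂ ℤ :=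
  ∑ g : ZMod n, (zC n) ^ ((k * g).val) • q g

lemma PC_inv (a : ZMod n) :
    ∑ k : ZMod n, (zC n) ^ ((k * (-a)).val) • PC n q k = (n : ℂ) • q a := by
  simp only [PC, Finset.smul_sum, smul_smul, zC_val_add]
  rw [Finset.sum_comm]
  have : ∀ g : ZMod n, ∑ k : ZMod n, (zC n) ^ ((k * (-a) + k * g).val) • q g
      = (if g - a = 0 then (n:ℂ) else 0) • q g := by
    intro g
    rw [← Finset.sum_smul, ← zC_orth n (g - a)]
    congr 1
    refine Finset.sum_congr rfl fun k _ => ?_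
    congr 2
    ring
  simp only [this, sub_eq_zero]
  have : ∀ x : ZMod n, (if x = a then (n:ℂ) else 0) • q x = if x = a then (n:ℂ) • q x else 0 := by
    intro x; split <;> simp
  simp only [this]
  rw [Finset.sum_ite_eq' Finset.univ a (fun g => (n:ℂ) • q g), if_pos (Finset.mem_univ a)]

lemma PC_diag (g h : ZMod n) :
    ∑ k : ZMod n, ((zC n) ^ ((k * (-g)).val) * (zC n) ^ ((k * h).val)) • (PC n q k * PC n q k)
      = (n : ℂ) • ∑ s : ZMod n, q (g - s) * q (s - h) := by
  have expand : ∀ k : ZMod n,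
      ((zC n) ^ ((k * (-g)).val) * (zC n) ^ ((k * h).val)) • (PC n q k * PC n q k)
      = ∑ a : ZMod n, ∑ b : ZMod n,
          (zC n) ^ ((k * (h - g + a + b)).val) • (q a * q b) := by
    intro k
    rw [PC, Finset.sum_mul_sum, Finset.smul_sum]
    refine Finset.sum_congr rfl fun a _ => ?_
    rw [Finset.smul_sum]
    refine Finset.sum_congr rfl fun b _ => ?_
    rw [smul_mul_smul_comm, smul_smul, zC_val_add, zC_val_add, zC_val_add]
    congr 2
    ring
  simp only [expand]
  rw [Finset.sum_comm]
  have swap : ∀ a : ZMod n,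
      (∑ k : ZMod n, ∑ b : ZMod n, (zC n) ^ ((k * (h - g + a + b)).val) • (q a * q b))
      = (n : ℂ) • (q a * q (g - h - a)) := by
    intro a
    rw [Finset.sum_comm]
    have inner : ∀ b : ZMod n,
        (∑ k : ZMod n, (zC n) ^ ((k * (h - g + a + b)).val) • (q a * q b))
        = (if b = g - h - a then (n:ℂ) • (q a * q b) else 0) := by
      intro b
      rw [← Finset.sum_smul, zC_orth]
      have : (h - g + a + b = 0) ↔ b = g - h - a := by
        constructor <;> intro H <;> linear_combination H
      simp only [this]
      split <;> simp
    simp only [inner]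
    rw [Finset.sum_ite_eq' Finset.univ (g - h - a) (fun b => (n:ℂ) • (q a * q b)),
        if_pos (Finset.mem_univ _)]
  simp only [swap]
  rw [← Finset.smul_sum]
  congr 1
  refine (Fintype.sum_equiv (Equiv.subLeft g) _ _ fun s => ?_).symm
  simp only [Equiv.subLeft_apply]
  congr 2
  ring

lemma main_id (g h : ZMod n) :
    (n:ℂ) • ((∑ s : ZMod n, q (g - s) * q (s - h)) - (n:ℂ) • (q g * q (-h)))
    = - ∑ k : ZMod n, ∑ l : ZMod n,
        (if k ≠ l then ((zC n) ^ ((k * (-g)).val) * (zC n) ^ ((l * h).val)) • (PC n q k * PC n q l)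
         else 0) := by
  set X : ZMod n → ZMod n → AddMonoidAlgebra ℂ ℤ := fun k l =>
    ((zC n) ^ ((k * (-g)).val) * (zC n) ^ ((l * h).val)) • (PC n q k * PC n q l) with hX
  have A : ∑ k : ZMod n, ∑ l : ZMod n, X k l = ((n:ℂ) * n) • (q g * q (-h)) := by
    have : ∀ k l : ZMod n, X k l =
        ((zC n) ^ ((k * (-g)).val) • PC n q k) * ((zC n) ^ ((l * h).val) • PC n q l) := by
      intro k l; rw [hX, smul_mul_smul_comm]
    simp only [this]
    rw [← Finset.sum_mul_sum, PC_inv n q g]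
    have h2 : ∑ l : ZMod n, (zC n) ^ ((l * h).val) • PC n q l = (n : ℂ) • q (-h) := by
      have := PC_inv n q (-h)
      simpa [neg_neg] using this
    rw [h2, smul_mul_smul_comm]
  have D : ∑ k : ZMod n, X k k = (n : ℂ) • ∑ s : ZMod n, q (g - s) * q (s - h) :=
    PC_diag n q g h
  have split : ∑ k : ZMod n, ∑ l : ZMod n, X k l
      = (∑ k : ZMod n, X k k) + ∑ k : ZMod n, ∑ l : ZMod n, (if k ≠ l then X k l else 0) := by
    have : ∀ k l : ZMod n, X k l
        = (if k = l then X k l else 0) + (if k ≠ l then X k l else 0) := by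
      intro k l; by_cases hkl : k = l <;> simp [hkl]
    have h1 : ∑ k : ZMod n, ∑ l : ZMod n, X k l
        = ∑ k : ZMod n, ∑ l : ZMod n,
            ((if k = l then X k l else 0) + (if k ≠ l then X k l else 0)) :=
      Finset.sum_congr rfl fun k _ => Finset.sum_congr rfl fun l _ => this k l
    rw [h1]
    simp only [Finset.sum_add_distrib]
    congr 1
    refine Finset.sum_congr rfl fun k _ => ?_
    rw [Finset.sum_ite_eq Finset.univ k (X k), if_pos (Finset.mem_univ _)]
  have : (n:ℂ) • ((∑ s : ZMod n, q (g - s) * q (s - h)) - (n:ℂ) • (q g * q (-h)))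
      = (∑ k : ZMod n, X k k) - ∑ k : ZMod n, ∑ l : ZMod n, X k l := by
    rw [D, A, smul_sub, smul_smul]
  rw [this, split]
  abel
end Core


open scoped Classical in
/-- The approximate rank-one factorization of `M²` at the heart of Theorem 1.3, for a
circulant matrix `M` with Laurent-polynomial entries `M_{g,h} = q_{g−h}` over `ℤ/nℤ`:
columnwise, `M² − n·(q_g q_{−h})` is bounded in `l¹` by `∑_{k ≠ l} ‖p_k p_l‖₁`, where
`p_k = ∑_g ζ^{kg} q_g` are the eigenvalue polynomials and `ζ = exp(2πi/n)`. -/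
theorem circulant_square_approx_rank_one (n : ℕ) [NeZero n]
    (q : ZMod n → AddMonoidAlgebra ℂ ℤ) :
    ∀ h : ZMod n,
      ∑ g : ZMod n,
        l1C ((Matrix.of (fun g' h' : ZMod n => q (g' - h')) *
              Matrix.of (fun g' h' : ZMod n => q (g' - h'))) g h
             - (n : ℂ) • (q g * q (-h)))
        ≤ ∑ k : ZMod n, ∑ l : ZMod n,
            if k ≠ l then
              l1C ((∑ g : ZMod n,
                      (Complex.exp (2 * Real.pi * Complex.I / n)) ^ ((k * g).val) • q g) *
                   (∑ g : ZMod n,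
                      (Complex.exp (2 * Real.pi * Complex.I / n)) ^ ((l * g).val) • q g))
            else 0 := by
  intro h
  have goalR : (∑ k : ZMod n, ∑ l : ZMod n,
      if k ≠ l then
        l1C ((∑ g : ZMod n,
                (Complex.exp (2 * Real.pi * Complex.I / n)) ^ ((k * g).val) • q g) *
             (∑ g : ZMod n,
                (Complex.exp (2 * Real.pi * Complex.I / n)) ^ ((l * g).val) • q g))
      else 0)
      = ∑ k : ZMod n, ∑ l : ZMod n,
          if k ≠ l then l1C (PC n q k * PC n q l) else 0 := rfl
  rw [goalR]
  set S : ℝ := ∑ k : ZMod n, ∑ l : ZMod n,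
      if k ≠ l then l1C (PC n q k * PC n q l) else 0 with hS
  have npos : (0:ℝ) < n := by
    exact_mod_cast Nat.pos_of_ne_zero (NeZero.ne n)
  have key : ∀ g : ZMod n,
      (n:ℝ) * l1C ((Matrix.of (fun g' h' : ZMod n => q (g' - h')) *
              Matrix.of (fun g' h' : ZMod n => q (g' - h'))) g h
             - (n : ℂ) • (q g * q (-h))) ≤ S := by
    intro g
    have hM : (Matrix.of (fun g' h' : ZMod n => q (g' - h')) *
              Matrix.of (fun g' h' : ZMod n => q (g' - h'))) g h
        = ∑ s : ZMod n, q (g - s) * q (s - h) := by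
      simp [Matrix.mul_apply]
    rw [hM]
    have hnorm : ‖(n:ℂ)‖ = (n:ℝ) := by simp
    calc (n:ℝ) * l1C ((∑ s : ZMod n, q (g - s) * q (s - h)) - (n:ℂ) • (q g * q (-h)))
        = l1C ((n:ℂ) • ((∑ s : ZMod n, q (g - s) * q (s - h)) - (n:ℂ) • (q g * q (-h)))) := by
          rw [l1C_smul, hnorm]
      _ = l1C (- ∑ k : ZMod n, ∑ l : ZMod n,
            (if k ≠ l then ((zC n) ^ ((k * (-g)).val) * (zC n) ^ ((l * h).val))
              • (PC n q k * PC n q l) else 0)) := by rw [main_id]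
      _ = l1C (∑ k : ZMod n, ∑ l : ZMod n,
            (if k ≠ l then ((zC n) ^ ((k * (-g)).val) * (zC n) ^ ((l * h).val))
              • (PC n q k * PC n q l) else 0)) := l1C_neg _
      _ ≤ ∑ k : ZMod n, l1C (∑ l : ZMod n,
            (if k ≠ l then ((zC n) ^ ((k * (-g)).val) * (zC n) ^ ((l * h).val))
              • (PC n q k * PC n q l) else 0)) := l1C_sum_le _ _
      _ ≤ ∑ k : ZMod n, ∑ l : ZMod n, l1C
            (if k ≠ l then ((zC n) ^ ((k * (-g)).val) * (zC n) ^ ((l * h).val))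
              • (PC n q k * PC n q l) else 0) :=
          Finset.sum_le_sum fun k _ => l1C_sum_le _ _
      _ = S := by
          rw [hS]
          refine Finset.sum_congr rfl fun k _ => Finset.sum_congr rfl fun l _ => ?_
          by_cases hkl : k ≠ l
          · rw [if_pos hkl, if_pos hkl, l1C_smul]
            rw [norm_mul, norm_pow, norm_pow, zC_norm, one_pow, one_pow, one_mul, one_mul]
          · rw [if_neg hkl, if_neg hkl, l1C_zero]
  have each : ∀ g : ZMod n,
      l1C ((Matrix.of (fun g' h' : ZMod n => q (g' - h')) *
              Matrix.of (fun g' h' : ZMod n => q (g' - h'))) g h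
             - (n : ℂ) • (q g * q (-h))) ≤ S / n := by
    intro g
    rw [le_div_iff₀ npos, mul_comm]
    exact key g
  calc ∑ g : ZMod n,
        l1C ((Matrix.of (fun g' h' : ZMod n => q (g' - h')) *
              Matrix.of (fun g' h' : ZMod n => q (g' - h'))) g h
             - (n : ℂ) • (q g * q (-h)))
      ≤ ∑ _g : ZMod n, S / n := Finset.sum_le_sum fun g _ => each g
    _ = (n:ℝ) * (S / n) := by
        rw [Finset.sum_const, Finset.card_univ, ZMod.card, nsmul_eq_mul]
    _ = S := by field_simp
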